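/- Let ℓ ≥ 1 be a natural number and let x be a real number with |x| < 1. Then the series ∑_{k=0}^∞ (∏_{j=0}^{ℓ−1} (k² − j²))·x^k converges and equals ((2ℓ)!/2) · x^ℓ·(1 + x) / (1 − x)^{2ℓ+1}. -/

import Mathlib

lemma key_prod (l : ℕ) : ∀ n : ℕ,
    ∏ j ∈ Finset.range (l + 1), (((n + (l + 1) : ℕ) : ℝ) ^ 2 - (j : ℝ) ^ 2)
      = (((n + l + 1) * (n + 2 * l + 1).descFactorial (2 * l + 1) : ℕ) : ℝ) := by
  induction l with
  | zero =>
    intro n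
    simp [Nat.descFactorial]
    ring_nf
  | succ l ih =>
    intro n
    rw [Finset.prod_range_succ]
    have h1 : ∏ j ∈ Finset.range (l + 1), (((n + (l + 1 + 1) : ℕ) : ℝ) ^ 2 - (j : ℝ) ^ 2)
        = ∏ j ∈ Finset.range (l + 1), ((((n + 1) + (l + 1) : ℕ) : ℝ) ^ 2 - (j : ℝ) ^ 2) := by
      have : n + (l + 1 + 1) = (n + 1) + (l + 1) := by omega
      rw [this]
    rw [h1, ih (n + 1)]
    have h2 : (n + 2 * (l + 1) + 1).descFactorial (2 * (l + 1) + 1)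
        = (n + 1) * ((n + 2 * l + 3) * (n + 2 * l + 2).descFactorial (2 * l + 1)) := by
      have e1 : n + 2 * (l + 1) + 1 = (n + 2 * l + 2) + 1 := by omega
      have e2 : 2 * (l + 1) + 1 = (2 * l + 2) + 1 := by omega
      rw [e1, e2, Nat.succ_descFactorial_succ, Nat.descFactorial_succ]
      have : n + 2 * l + 2 - (2 * l + 1) = n + 1 := by omega
      rw [this]
      ring
    rw [h2]
    push_cast
    ring

theorem polylog_combination_even (l : ℕ) (hl : 1 ≤ l) (x : ℝ) (hx : |x| < 1) :
    HasSum (fun k : ℕ => (∏ j ∈ Finset.range l, ((k : ℝ) ^ 2 - (j : ℝ) ^ 2)) * x ^ k)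
      (((2 * l).factorial : ℝ) / 2 * (x ^ l * (1 + x) / (1 - x) ^ (2 * l + 1))) := by
  set f : ℕ → ℝ := fun k : ℕ => (∏ j ∈ Finset.range l, ((k : ℝ) ^ 2 - (j : ℝ) ^ 2)) * x ^ k with hf
  have hx' : ‖x‖ < 1 := by rwa [Real.norm_eq_abs]
  have h1x : (1 : ℝ) - x ≠ 0 := by
    intro h
    rw [sub_eq_zero] at h
    rw [← h] at hx
    simp at hx
  -- the two basic geometric-type sums
  have A : HasSum (fun n : ℕ => (((n + 2 * l).choose (2 * l) : ℕ) : ℝ) * x ^ n)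
      (1 / (1 - x) ^ (2 * l + 1)) := hasSum_choose_mul_geometric_of_norm_lt_one (2 * l) hx'
  have B : HasSum (fun n : ℕ => (((n + (2 * l - 1)).choose (2 * l - 1) : ℕ) : ℝ) * x ^ n)
      (1 / (1 - x) ^ ((2 * l - 1) + 1)) := hasSum_choose_mul_geometric_of_norm_lt_one (2 * l - 1) hx'
  -- combine: x^l * ( (2l)! * A - l * (2l-1)! * B )
  have C : HasSum (fun n : ℕ =>
      x ^ l * (((2 * l).factorial : ℝ) * (((n + 2 * l).choose (2 * l) : ℕ) : ℝ) * x ^ n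
        - (l : ℝ) * (((2 * l - 1).factorial : ℝ) * (((n + (2 * l - 1)).choose (2 * l - 1) : ℕ) : ℝ) * x ^ n)))
      (x ^ l * (((2 * l).factorial : ℝ) * (1 / (1 - x) ^ (2 * l + 1))
        - (l : ℝ) * (((2 * l - 1).factorial : ℝ) * (1 / (1 - x) ^ ((2 * l - 1) + 1))))) := by
    apply HasSum.mul_left
    exact ((A.mul_left _).sub ((B.mul_left _).mul_left _)).congr_fun (by intro n; ring)
  -- now show the shifted function equals f (n + l)
  obtain ⟨m, rfl⟩ : ∃ m, l = m + 1 := ⟨l - 1, by omega⟩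
  have hfun : ∀ n : ℕ, f (n + (m + 1)) =
      x ^ (m + 1) * (((2 * (m + 1)).factorial : ℝ) * (((n + 2 * (m + 1)).choose (2 * (m + 1)) : ℕ) : ℝ) * x ^ n
        - ((m + 1 : ℕ) : ℝ) * (((2 * (m + 1) - 1).factorial : ℝ) * (((n + (2 * (m + 1) - 1)).choose (2 * (m + 1) - 1) : ℕ) : ℝ) * x ^ n)) := by
    intro n
    have key := key_prod m n
    have d2 : ((n + 2 * m + 1).descFactorial (2 * m + 1) : ℝ)
        = ((2 * m + 1).factorial : ℝ) * ((n + 2 * m + 1).choose (2 * m + 1) : ℝ) := by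
      exact_mod_cast congrArg (Nat.cast (R := ℝ))
        (Nat.descFactorial_eq_factorial_mul_choose (n + 2 * m + 1) (2 * m + 1))
    have d1 : ((n + 2 * m + 2).descFactorial (2 * m + 2) : ℝ)
        = ((2 * m + 2).factorial : ℝ) * ((n + 2 * m + 2).choose (2 * m + 2) : ℝ) := by
      exact_mod_cast congrArg (Nat.cast (R := ℝ))
        (Nat.descFactorial_eq_factorial_mul_choose (n + 2 * m + 2) (2 * m + 2))
    -- D1 = (n + 2m + 2) * D2
    have dd : ((n + 2 * m + 2).descFactorial (2 * m + 2)) =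
        (n + 2 * m + 2) * (n + 2 * m + 1).descFactorial (2 * m + 1) := by
      exact Nat.succ_descFactorial_succ (n + 2 * m + 1) (2 * m + 1)
    -- rewrite f (n + (m+1))
    simp only [hf]
    rw [key]
    simp only [show 2 * (m + 1) = 2 * m + 2 from by omega,
      show 2 * m + 2 - 1 = 2 * m + 1 from by omega,
      show n + (2 * m + 2) = n + 2 * m + 2 from by omega,
      show n + (2 * m + 1) = n + 2 * m + 1 from by omega]
    rw [← d1, ← d2, dd]
    push_cast
    rw [pow_add]
    ring
  have C' : HasSum (fun n : ℕ => f (n + (m + 1)))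
      (x ^ (m + 1) * (((2 * (m + 1)).factorial : ℝ) * (1 / (1 - x) ^ (2 * (m + 1) + 1))
        - ((m + 1 : ℕ) : ℝ) * (((2 * (m + 1) - 1).factorial : ℝ) * (1 / (1 - x) ^ ((2 * (m + 1) - 1) + 1))))) := by
    exact C.congr_fun hfun
  have D := (hasSum_nat_add_iff (f := f) (m + 1)).1 C'
  have hzero : ∑ i ∈ Finset.range (m + 1), f i = 0 := by
    apply Finset.sum_eq_zero
    intro i hi
    simp only [hf]
    have : ∏ j ∈ Finset.range (m + 1), ((i : ℝ) ^ 2 - (j : ℝ) ^ 2) = 0 :=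
      Finset.prod_eq_zero hi (by ring)
    rw [this, zero_mul]
  rw [hzero, add_zero] at D
  convert D using 1
  · rfl
  have e2 : 2 * (m + 1) - 1 = 2 * m + 1 := by omega
  have efact : ((2 * (m + 1)).factorial : ℝ) = (2 * m + 2) * ((2 * m + 1).factorial : ℝ) := by
    have : (2 * (m + 1)).factorial = (2 * m + 2) * (2 * m + 1).factorial := by
      rw [show 2 * (m + 1) = (2 * m + 1) + 1 by omega, Nat.factorial_succ]
    exact_mod_cast congrArg (Nat.cast (R := ℝ)) this
  rw [e2, efact]
  have hpow : (1 - x) ^ (2 * (m + 1) + 1) = (1 - x) ^ (2 * m + 1 + 1) * (1 - x) := by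
    rw [show 2 * (m + 1) + 1 = 2 * m + 1 + 1 + 1 by omega, pow_succ]
  rw [hpow]
  have hp : (1 - x) ^ (2 * m + 1 + 1) ≠ 0 := pow_ne_zero _ h1x
  field_simp
  push_cast
  ring
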